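/- If there exist local linear maps transforming W^{⊗m} into GHZ^{⊗n} (party-wise regrouped), then n/(m+1) ≤ (1/2)·log₂ 7. -/

import Mathlib

open TensorProduct

/-- Tripartite tensor rank: minimal number of product vectors summing to `ψ`. -/
noncomputable def tRank {A B C : Type*} [AddCommGroup A] [Module ℂ A]
    [AddCommGroup B] [Module ℂ B] [AddCommGroup C] [Module ℂ C]
    (ψ : A ⊗[ℂ] (B ⊗[ℂ] C)) : ℕ :=
  sInf {r | ∃ (a : Fin r → A) (b : Fin r → B) (c : Fin r → C),
    ψ = ∑ i, a i ⊗ₜ[ℂ] (b i ⊗ₜ[ℂ] c i)}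

/-- `(ℂ²)^{⊗n}`, realized as functions on `n`-bit strings. -/
abbrev V (n : ℕ) : Type := (Fin n → Bool) → ℂ

/-- the computational-basis vector `|s⟩` of `n` qubits. -/
noncomputable def qb {n : ℕ} (s : Fin n → Bool) : V n := Pi.single s 1

/-- `W^{⊗n}` regrouped party-wise: in copy `k` the excitation goes to party `f k`. -/
noncomputable def Wn (n : ℕ) : V n ⊗[ℂ] (V n ⊗[ℂ] V n) :=
  ∑ f : Fin n → Fin 3,
    qb (fun k => decide (f k = 0)) ⊗ₜ[ℂ]
      (qb (fun k => decide (f k = 1)) ⊗ₜ[ℂ] qb (fun k => decide (f k = 2)))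

/-- `GHZ^{⊗n}` regrouped party-wise: `∑ₓ |x⟩|x⟩|x⟩`. -/
noncomputable def GHZn (n : ℕ) : V n ⊗[ℂ] (V n ⊗[ℂ] V n) :=
  ∑ x : Fin n → Bool, qb x ⊗ₜ[ℂ] (qb x ⊗ₜ[ℂ] qb x)

set_option synthInstance.maxHeartbeats 1000000

namespace WGHZaux

/-- Coordinate equivalence for one party. -/
noncomputable def eV (n : ℕ) : V n ≃ₗ[ℂ] ((Fin n → Bool) →₀ ℂ) :=
  (Finsupp.linearEquivFunOnFinite ℂ ℂ (Fin n → Bool)).symm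

/-- Full coordinate equivalence (flattening) of the tripartite tensor space. -/
noncomputable def flat (n : ℕ) :
    V n ⊗[ℂ] (V n ⊗[ℂ] V n) ≃ₗ[ℂ]
      ((Fin n → Bool) × ((Fin n → Bool) × (Fin n → Bool)) →₀ ℂ) :=
  (TensorProduct.congr (eV n)
      ((TensorProduct.congr (eV n) (eV n)).trans
        (finsuppTensorFinsupp' ℂ _ _))).trans (finsuppTensorFinsupp' ℂ _ _)

lemma eV_apply {n : ℕ} (a : V n) (s : Fin n → Bool) : eV n a s = a s := rfl

lemma flat_tmul {n : ℕ} (a b c : V n) (s t u : Fin n → Bool) :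
    flat n (a ⊗ₜ[ℂ] (b ⊗ₜ[ℂ] c)) (s, (t, u)) = a s * (b t * c u) := by
  simp [flat, TensorProduct.congr_tmul, finsuppTensorFinsupp'_apply_apply, eV_apply]

lemma qb_apply {n : ℕ} (x y : Fin n → Bool) :
    (qb x : V n) y = if y = x then 1 else 0 := by
  simp [qb, Pi.single_apply]

/-- number of `true`s among three booleans -/
def cnt (a b c : Bool) : ℕ := (cond a 1 0) + (cond b 1 0) + (cond c 1 0)

lemma cnt_le_three (a b c : Bool) : cnt a b c ≤ 3 := by
  cases a <;> cases b <;> cases c <;> decide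

lemma flat_Wn {m : ℕ} (s t u : Fin m → Bool) :
    flat m (Wn m) (s, (t, u)) =
      if (∀ k, cnt (s k) (t k) (u k) = 1) then 1 else 0 := by
  classical
  have hterm : ∀ f : Fin m → Fin 3,
      flat m (qb (fun k => decide (f k = 0)) ⊗ₜ[ℂ]
        (qb (fun k => decide (f k = 1)) ⊗ₜ[ℂ] qb (fun k => decide (f k = 2)))) (s, (t, u)) =
      if (s = (fun k => decide (f k = 0)) ∧ t = (fun k => decide (f k = 1)) ∧
          u = (fun k => decide (f k = 2))) then 1 else 0 := by
    intro f
    rw [flat_tmul, qb_apply, qb_apply, qb_apply]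
    by_cases h1 : s = (fun k => decide (f k = 0)) <;>
      by_cases h2 : t = (fun k => decide (f k = 1)) <;>
        by_cases h3 : u = (fun k => decide (f k = 2)) <;>
          simp [h1, h2, h3]
  have hW : flat m (Wn m) (s, (t, u)) =
      ∑ f : Fin m → Fin 3,
        (if (s = (fun k => decide (f k = 0)) ∧ t = (fun k => decide (f k = 1)) ∧
            u = (fun k => decide (f k = 2))) then (1:ℂ) else 0) := by
    rw [Wn, map_sum, Finsupp.finset_sum_apply]
    exact Finset.sum_congr rfl fun f _ => hterm f
  rw [hW]
  by_cases hc : ∀ k, cnt (s k) (t k) (u k) = 1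
  · rw [if_pos hc]
    have key : ∀ a b c : Bool, cnt a b c = 1 →
        (decide ((if a then (0 : Fin 3) else if b then 1 else 2) = 0) = a ∧
         decide ((if a then (0 : Fin 3) else if b then 1 else 2) = 1) = b ∧
         decide ((if a then (0 : Fin 3) else if b then 1 else 2) = 2) = c) := by decide
    set f₀ : Fin m → Fin 3 := fun k => if s k then 0 else if t k then 1 else 2 with hf₀
    have hcond : s = (fun k => decide (f₀ k = 0)) ∧ t = (fun k => decide (f₀ k = 1)) ∧
        u = (fun k => decide (f₀ k = 2)) := by
      refine ⟨funext fun k => ?_, funext fun k => ?_, funext fun k => ?_⟩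
      · exact ((key _ _ _ (hc k)).1).symm
      · exact ((key _ _ _ (hc k)).2.1).symm
      · exact ((key _ _ _ (hc k)).2.2).symm
    rw [Finset.sum_eq_single f₀]
    · rw [if_pos hcond]
    · intro f _ hne
      rw [if_neg]
      rintro ⟨hs, ht, hu⟩
      apply hne
      have recov : ∀ x : Fin 3,
          (if decide (x = 0) = true then (0 : Fin 3)
            else if decide (x = 1) = true then 1 else 2) = x := by decide
      funext k
      have h1 : s k = decide (f k = 0) := by rw [hs]
      have h2 : t k = decide (f k = 1) := by rw [ht]
      rw [hf₀]
      simp only [h1, h2]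
      exact (recov (f k)).symm
    · intro hf; exact absurd (Finset.mem_univ f₀) hf
  · rw [if_neg hc]
    apply Finset.sum_eq_zero
    intro f _
    rw [if_neg]
    rintro ⟨hs, ht, hu⟩
    apply hc
    intro k
    have hone : ∀ x : Fin 3,
        cnt (decide (x = 0)) (decide (x = 1)) (decide (x = 2)) = 1 := by decide
    rw [hs, ht, hu]
    exact hone (f k)

lemma flat_GHZn {n : ℕ} (s t u : Fin n → Bool) :
    flat n (GHZn n) (s, (t, u)) = if (t = s ∧ u = s) then 1 else 0 := by
  classical
  have hG : flat n (GHZn n) (s, (t, u)) =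
      ∑ x : Fin n → Bool, (if (s = x ∧ t = x ∧ u = x) then (1:ℂ) else 0) := by
    rw [GHZn, map_sum, Finsupp.finset_sum_apply]
    refine Finset.sum_congr rfl fun x _ => ?_
    rw [flat_tmul, qb_apply, qb_apply, qb_apply]
    by_cases h1 : s = x <;> by_cases h2 : t = x <;> by_cases h3 : u = x <;>
      simp [h1, h2, h3]
  rw [hG]
  by_cases h : t = s ∧ u = s
  · rw [if_pos h]
    rw [Finset.sum_eq_single s]
    · rw [if_pos ⟨rfl, h.1, h.2⟩]
    · intro x _ hne
      rw [if_neg]; rintro ⟨h1, _, _⟩; exact hne h1.symm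
    · intro hf; exact absurd (Finset.mem_univ s) hf
  · rw [if_neg h]
    apply Finset.sum_eq_zero
    intro x _
    rw [if_neg]
    rintro ⟨h1, h2, h3⟩
    exact h ⟨h2.trans h1.symm, h3.trans h1.symm⟩

open Polynomial in
lemma lagrange_delta (N : ℕ) (v : Fin (N + 1) → ℂ) (hv : Function.Injective v) :
    ∃ lam : Fin (N + 1) → ℂ, ∀ e ≤ N, ∑ j, lam j * v j ^ e = if e = 0 then 1 else 0 := by
  refine ⟨fun j => (Lagrange.basis Finset.univ v j).eval 0, fun e he => ?_⟩
  have hvs : Set.InjOn v ↑(Finset.univ : Finset (Fin (N + 1))) := fun a _ b _ h => hv h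
  have hdeg : (X ^ e : ℂ[X]).degree < ((Finset.univ : Finset (Fin (N + 1))).card : ℕ) := by
    rw [degree_X_pow, Finset.card_univ, Fintype.card_fin]
    exact_mod_cast Nat.lt_succ_of_le he
  have h := Lagrange.eq_interpolate (f := (X ^ e : ℂ[X])) hvs hdeg
  have h2 := congrArg (Polynomial.eval 0) h
  rw [Lagrange.interpolate_apply, eval_finset_sum] at h2
  simp only [eval_pow, eval_X, eval_mul, eval_C] at h2
  have h3 : ∑ j : Fin (N + 1), (Lagrange.basis Finset.univ v j).eval 0 * v j ^ e
      = (0 : ℂ) ^ e := by rw [h2]; exact Finset.sum_congr rfl fun j _ => mul_comm _ _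
  rw [h3, zero_pow_eq]

lemma prod_bound : ∀ m : ℕ, (m + 1) ^ 2 * 4 ^ m ≤ 7 ^ (m + 1) := by
  intro m
  induction m with
  | zero => norm_num
  | succ k ih =>
    rcases Nat.lt_or_ge k 3 with hk | hk
    · interval_cases k <;> norm_num
    · have h1 : 4 * (k + 2) ^ 2 ≤ 7 * (k + 1) ^ 2 := by nlinarith
      calc (k + 1 + 1) ^ 2 * 4 ^ (k + 1) = 4 * (k + 2) ^ 2 * 4 ^ k := by ring
        _ ≤ 7 * (k + 1) ^ 2 * 4 ^ k := Nat.mul_le_mul_right _ h1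
        _ = 7 * ((k + 1) ^ 2 * 4 ^ k) := by ring
        _ ≤ 7 * 7 ^ (k + 1) := Nat.mul_le_mul_left _ ih
        _ = 7 ^ (k + 1 + 1) := by ring

/-- The key decomposition: `W^{⊗m}` is a sum of `(m+1)·2^m` product tensors. -/
lemma Wn_decomp (m : ℕ) :
    ∃ a b c : Fin (m + 1) × (Fin m → Bool) → V m,
      Wn m = ∑ i, a i ⊗ₜ[ℂ] (b i ⊗ₜ[ℂ] c i) := by
  classical
  set eps : Fin (m + 1) → ℂ := fun j => (j : ℕ) + 1 with heps
  have heps_ne : ∀ j, eps j ≠ 0 := by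
    intro j
    simp only [heps]
    intro hh
    have hz : (((j : ℕ) + 1 : ℕ) : ℂ) = 0 := by push_cast; linear_combination hh
    rw [Nat.cast_eq_zero] at hz
    omega
  have hv : Function.Injective (fun j => eps j ^ 2) := by
    intro a b h
    simp only [heps] at h
    have h' : ((a : ℕ) + 1) ^ 2 = ((b : ℕ) + 1) ^ 2 := by exact_mod_cast h
    have := Nat.pow_left_injective (n := 2) (by norm_num) h'
    exact Fin.ext (by omega)
  obtain ⟨lam, hlam⟩ := lagrange_delta m (fun j => eps j ^ 2) hv
  set vv : Fin (m + 1) × (Fin m → Bool) → V m :=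
    fun i s => ∏ k, (if s k then (if i.2 k then eps i.1 else -eps i.1) else 1) with hvv
  set coef : Fin (m + 1) × (Fin m → Bool) → ℂ :=
    fun i => lam i.1 * ((2 * eps i.1) ^ m)⁻¹ * ∏ k, (if i.2 k then (1:ℂ) else -1) with hcoef
  refine ⟨fun i => coef i • vv i, vv, vv, ?_⟩
  apply (flat m).injective
  ext p
  obtain ⟨s, t, u⟩ := p
  rw [flat_Wn, map_sum, Finsupp.finset_sum_apply]
  set c : Fin m → ℕ := fun k => cnt (s k) (t k) (u k) with hcdef
  have hc3 : ∀ k, c k ≤ 3 := fun k => cnt_le_three _ _ _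
  have hterm : ∀ i, flat m ((coef i • vv i) ⊗ₜ[ℂ] (vv i ⊗ₜ[ℂ] vv i)) (s, (t, u)) =
      coef i * (vv i s * (vv i t * vv i u)) := by
    intro i
    rw [flat_tmul]
    simp only [Pi.smul_apply, smul_eq_mul]
    ring
  rw [Finset.sum_congr rfl fun i _ => hterm i]
  rw [Fintype.sum_prod_type]
  -- inner sum over subsets, for a fixed interpolation node j
  have hinner : ∀ j : Fin (m + 1),
      (∑ S : Fin m → Bool, coef (j, S) * (vv (j, S) s * (vv (j, S) t * vv (j, S) u))) =
      lam j * ((2 * eps j) ^ m)⁻¹ *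
        ∏ k, (eps j ^ c k - (-eps j) ^ c k) := by
    intro j
    have hstep : ∀ S : Fin m → Bool,
        coef (j, S) * (vv (j, S) s * (vv (j, S) t * vv (j, S) u)) =
        lam j * ((2 * eps j) ^ m)⁻¹ *
          ∏ k, ((if S k then (1:ℂ) else -1) *
            ((if s k then (if S k then eps j else -eps j) else 1) *
             ((if t k then (if S k then eps j else -eps j) else 1) *
              (if u k then (if S k then eps j else -eps j) else 1)))) := by
      intro S
      simp only [hcoef, hvv]
      rw [Finset.prod_mul_distrib, Finset.prod_mul_distrib, Finset.prod_mul_distrib]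
      ring
    rw [Finset.sum_congr rfl fun S _ => hstep S, ← Finset.mul_sum]
    congr 1
    rw [← Fintype.prod_sum (f := fun k (b : Bool) =>
      ((if b then (1:ℂ) else -1) *
        ((if s k then (if b then eps j else -eps j) else 1) *
         ((if t k then (if b then eps j else -eps j) else 1) *
          (if u k then (if b then eps j else -eps j) else 1)))))]
    refine Finset.prod_congr rfl fun k _ => ?_
    rw [Fintype.sum_bool]
    simp only [if_true, if_false, hcdef]
    cases hs : s k <;> cases ht : t k <;> cases hu : u k <;> simp [cnt] <;> ring
  rw [Finset.sum_congr rfl fun j _ => hinner j]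
  by_cases hodd : ∀ k, c k % 2 = 1
  · -- all counts odd
    have hck : ∀ k, c k = 1 + 2 * ((c k - 1) / 2) := by
      intro k; have := hc3 k; have := hodd k; omega
    set e : ℕ := ∑ k, (c k - 1) / 2 with hedef
    have he_le : e ≤ m := by
      rw [hedef]
      calc ∑ k, (c k - 1) / 2 ≤ ∑ _k : Fin m, 1 :=
            Finset.sum_le_sum fun k _ => by have := hc3 k; omega
        _ = m := by simp
    have hprod : ∀ j : Fin (m + 1),
        (∏ k, (eps j ^ c k - (-eps j) ^ c k)) = 2 ^ m * (eps j ^ m * (eps j ^ 2) ^ e) := by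
      intro j
      have h1 : ∀ k : Fin m, eps j ^ c k - (-eps j) ^ c k = 2 * eps j ^ c k := by
        intro k
        have hodd' : Odd (c k) := Nat.odd_iff.mpr (hodd k)
        rw [hodd'.neg_pow]; ring
      rw [Finset.prod_congr rfl fun k _ => h1 k, Finset.prod_mul_distrib,
        Finset.prod_const, Finset.prod_pow_eq_pow_sum]
      have hsum : ∑ k, c k = m + 2 * e := by
        have h0 : ∑ k, c k = ∑ k : Fin m, (1 + 2 * ((c k - 1) / 2)) :=
          Finset.sum_congr rfl fun k _ => hck k
        rw [h0, Finset.sum_add_distrib, Finset.sum_const, ← Finset.mul_sum]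
        simp [hedef]
      rw [Finset.card_univ, Fintype.card_fin, hsum, pow_add, pow_mul]
    rw [Finset.sum_congr rfl fun j _ => by rw [hprod j]]
    have hsimpl : ∀ j : Fin (m + 1),
        lam j * ((2 * eps j) ^ m)⁻¹ * (2 ^ m * (eps j ^ m * (eps j ^ 2) ^ e)) =
        lam j * (eps j ^ 2) ^ e := by
      intro j
      have h2 : (2 : ℂ) ≠ 0 := two_ne_zero
      have hε := heps_ne j
      rw [mul_pow]
      field_simp
    rw [Finset.sum_congr rfl fun j _ => hsimpl j, hlam e he_le]
    have hiff : (∀ k, c k = 1) ↔ e = 0 := by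
      rw [hedef, Finset.sum_eq_zero_iff]
      constructor
      · intro h k _; simp [h k]
      · intro h k
        have := h k (Finset.mem_univ k)
        have := hodd k
        have := hc3 k
        omega
    by_cases hall : ∀ k, c k = 1
    · rw [if_pos hall, if_pos (hiff.mp hall)]
    · rw [if_neg hall, if_neg (fun h => hall (hiff.mpr h))]
  · -- some count even : both sides vanish
    push_neg at hodd
    obtain ⟨k0, hk0⟩ := hodd
    have heven : Even (c k0) := Nat.even_iff.mpr (by omega)
    have hzero : ∀ j : Fin (m + 1),
        (∏ k, (eps j ^ c k - (-eps j) ^ c k)) = 0 := by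
      intro j
      apply Finset.prod_eq_zero (Finset.mem_univ k0)
      rw [heven.neg_pow]; ring
    rw [Finset.sum_congr rfl fun j _ => by rw [hzero j]]
    have : ¬ (∀ k, c k = 1) := fun h => by have := h k0; omega
    rw [if_neg this]
    simp

/-- From a finite product decomposition of `GHZn n`, bound `2 ^ n`. -/
lemma card_bound {n : ℕ} {ι : Type*} [Fintype ι] (A B C : ι → V n)
    (h : GHZn n = ∑ i, A i ⊗ₜ[ℂ] (B i ⊗ₜ[ℂ] C i)) : 2 ^ n ≤ Fintype.card ι := by
  classical
  set P : Matrix (Fin n → Bool) ι ℂ := Matrix.of fun s i => A i s with hP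
  set Q : Matrix ι ((Fin n → Bool) × (Fin n → Bool)) ℂ :=
    Matrix.of fun i p => B i p.1 * C i p.2 with hQ
  set M : Matrix (Fin n → Bool) ((Fin n → Bool) × (Fin n → Bool)) ℂ :=
    Matrix.of fun s p => if p.1 = s ∧ p.2 = s then 1 else 0 with hM
  set N : Matrix ((Fin n → Bool) × (Fin n → Bool)) (Fin n → Bool) ℂ :=
    Matrix.of fun p x => if p = (x, x) then 1 else 0 with hN
  have hPQ : P * Q = M := by
    ext s p
    obtain ⟨t, u⟩ := p
    have hh := congrArg (fun z => flat n z (s, (t, u))) h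
    rw [flat_GHZn, map_sum, Finsupp.finset_sum_apply] at hh
    rw [Finset.sum_congr rfl (fun i _ => flat_tmul (A i) (B i) (C i) s t u)] at hh
    rw [Matrix.mul_apply]
    simp only [hP, hQ, hM, Matrix.of_apply]
    rw [← hh]
  have hMN : M * N = 1 := by
    ext s x
    rw [Matrix.mul_apply, Matrix.one_apply]
    rw [Finset.sum_eq_single (x, x)]
    · simp only [hM, hN, Matrix.of_apply]
      by_cases hsx : s = x
      · subst hsx; simp
      · have hxs : ¬x = s := fun hc => hsx hc.symm
        simp [hsx, hxs]
    · intro p _ hne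
      simp only [hN, Matrix.of_apply, if_neg hne, mul_zero]
    · intro hf; exact absurd (Finset.mem_univ _) hf
  calc 2 ^ n = Fintype.card (Fin n → Bool) := by
        rw [Fintype.card_fun, Fintype.card_bool, Fintype.card_fin]
    _ = (1 : Matrix (Fin n → Bool) (Fin n → Bool) ℂ).rank := Matrix.rank_one.symm
    _ = (M * N).rank := by rw [hMN]
    _ ≤ M.rank := Matrix.rank_mul_le_left _ _
    _ = (P * Q).rank := by rw [hPQ]
    _ ≤ P.rank := Matrix.rank_mul_le_left _ _
    _ ≤ Fintype.card ι := P.rank_le_card_width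

end WGHZaux

theorem W_to_GHZ_rate (m n : ℕ)
    (h : ∃ (LA LB LC : V m →ₗ[ℂ] V n),
      (TensorProduct.map LA (TensorProduct.map LB LC)) (Wn m) = GHZn n) :
    (n : ℝ) / (m + 1) ≤ (1 / 2) * Real.logb 2 7 := by
  classical
  obtain ⟨LA, LB, LC, hL⟩ := h
  obtain ⟨a, b, c, hW⟩ := WGHZaux.Wn_decomp m
  have hG : GHZn n = ∑ i : Fin (m + 1) × (Fin m → Bool),
      (LA (a i)) ⊗ₜ[ℂ] ((LB (b i)) ⊗ₜ[ℂ] (LC (c i))) := by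
    rw [← hL, hW, map_sum]
    exact Finset.sum_congr rfl fun i _ => by rw [TensorProduct.map_tmul, TensorProduct.map_tmul]
  have hcard := WGHZaux.card_bound _ _ _ hG
  have h2 : 2 ^ n ≤ (m + 1) * 2 ^ m := by
    rwa [Fintype.card_prod, Fintype.card_fin, Fintype.card_fun, Fintype.card_bool,
      Fintype.card_fin] at hcard
  have h4 : 4 ^ n ≤ 7 ^ (m + 1) := by
    calc 4 ^ n = 2 ^ n * 2 ^ n := by rw [← mul_pow]; norm_num
      _ ≤ ((m + 1) * 2 ^ m) * ((m + 1) * 2 ^ m) := Nat.mul_le_mul h2 h2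
      _ = (m + 1) ^ 2 * (2 ^ m * 2 ^ m) := by ring
      _ = (m + 1) ^ 2 * 4 ^ m := by rw [← mul_pow]; norm_num
      _ ≤ 7 ^ (m + 1) := WGHZaux.prod_bound m
  have h7 : (4 : ℝ) ^ n ≤ 7 ^ (m + 1) := by exact_mod_cast h4
  have hlog : Real.logb 2 ((4:ℝ) ^ n) ≤ Real.logb 2 ((7:ℝ) ^ (m + 1)) :=
    (Real.logb_le_logb (by norm_num : (1:ℝ) < 2) (by positivity) (by positivity)).mpr h7
  rw [Real.logb_pow, Real.logb_pow] at hlog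
  have h42 : Real.logb 2 4 = 2 := by
    have : (4 : ℝ) = 2 ^ (2 : ℕ) := by norm_num
    rw [this, Real.logb_pow, Real.logb_self_eq_one (by norm_num)]
    norm_num
  rw [h42] at hlog
  have hm1 : (0 : ℝ) < (m : ℝ) + 1 := by positivity
  rw [div_le_iff₀ hm1]
  push_cast at hlog ⊢
  nlinarith [hlog]
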